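/- arXiv:2103.09357 — 2 statements merged into one kernel-verified Lean document; each statement's English description precedes it below -/
import Mathlib

section
/- Let V, Q be real Hilbert spaces with fitted norms: ‖q‖_Q² = |q|_Q² + c(q,q) (with |·|_Q a seminorm on Q and c symmetric positive semidefinite bilinear on Q), Q̄ the Riesz map of (·,·)_Q, B : V → Q' the operator with ⟨Bv,q⟩ = b(v,q), and ‖v‖_V² = |v|_V² + ‖Bv‖_{Q'}² (with |·|_V a seminorm on V). Suppose the bilinear form a on V×V is symmetric positive semidefinite, continuous with constant C̄_a (a(u,v) ≤ C̄_a‖u‖_V‖v‖_V), and coercive in the seminorm: a(v,v) ≥ C_a_low |v|_V² with C_a_low > 0. Suppose further there exists β > 0 such that for every q ∈ Q, sup_{v≠0} b(v,q)/‖v‖_V ≥ β |q|_Q. Then there exists α > 0, depending only on C̄_a, C_a_low, β, such that inf_{(u,p)≠0} sup_{(v,q)≠0} A((u,p),(v,q)) / (‖(u,p)‖_Y ‖(v,q)‖_Y) ≥ α, where A((u,p),(v,q)) = a(u,v)+b(v,p)+b(u,q)−c(p,q) and ‖(v,q)‖_Y² = ‖v‖_V² + ‖q‖_Q². -/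
/-- Cauchy–Schwarz for a symmetric positive semidefinite bilinear form. -/
lemma cs_aux' {Q : Type*} [AddCommGroup Q] [Module ℝ Q] (c : Q →ₗ[ℝ] Q →ₗ[ℝ] ℝ)
    (hsymm : ∀ p q, c p q = c q p) (hpos : ∀ q, 0 ≤ c q q) (p q : Q) :
    c p q ≤ Real.sqrt (c p p) * Real.sqrt (c q q) := by
  have key : (c p q)^2 ≤ c p p * c q q := by
    have h : ∀ t : ℝ, 0 ≤ c q q * (t * t) + (2 * c p q) * t + c p p := by
      intro t
      have h0 := hpos (p + t • q)
      simp only [map_add, map_smul, LinearMap.add_apply, LinearMap.smul_apply,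
        smul_eq_mul] at h0
      rw [hsymm q p] at h0
      nlinarith [h0]
    have hd := discrim_le_zero h
    rw [discrim] at hd
    nlinarith [hd]
  calc c p q ≤ |c p q| := le_abs_self _
    _ = Real.sqrt ((c p q)^2) := (Real.sqrt_sq_eq_abs _).symm
    _ ≤ Real.sqrt (c p p * c q q) := Real.sqrt_le_sqrt key
    _ = _ := Real.sqrt_mul (hpos p) _

set_option maxHeartbeats 1000000 in
/-- Main fitted-norm stability theorem: under the norm splittings
`‖q‖_Q² = |q|_Q² + c(q,q)`, `‖v‖_V² = |v|_V² + ‖Bv‖_{Q'}²`, continuity and seminorm-coercivity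
of `a`, and the small inf-sup condition for `b` in the seminorm `|·|_Q`, the big (Babuška)
inf-sup condition holds for `A((u,p),(v,q)) = a(u,v)+b(v,p)+b(u,q)-c(p,q)`. -/
theorem stmt3 {V Q : Type*}
    [NormedAddCommGroup V] [InnerProductSpace ℝ V] [CompleteSpace V]
    [NormedAddCommGroup Q] [InnerProductSpace ℝ Q] [CompleteSpace Q]
    (a : V →ₗ[ℝ] V →ₗ[ℝ] ℝ) (c : Q →ₗ[ℝ] Q →ₗ[ℝ] ℝ)
    (B : V →L[ℝ] StrongDual ℝ Q)
    (absV : Seminorm ℝ V) (absQ : Seminorm ℝ Q)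
    (hasymm : ∀ u v : V, a u v = a v u) (hapos : ∀ v : V, 0 ≤ a v v)
    (hcsymm : ∀ p q : Q, c p q = c q p) (hcpos : ∀ q : Q, 0 ≤ c q q)
    (hQfit : ∀ q : Q, ‖q‖ ^ 2 = absQ q ^ 2 + c q q)
    (hVfit : ∀ v : V, ‖v‖ ^ 2 = absV v ^ 2 + ‖B v‖ ^ 2)
    (Ca ca β : ℝ) (hCa : 0 < Ca) (hca : 0 < ca) (hβ : 0 < β)
    (hacont : ∀ u v : V, a u v ≤ Ca * ‖u‖ * ‖v‖)
    (hacoer : ∀ v : V, ca * absV v ^ 2 ≤ a v v)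
    (hinfsup : ∀ q : Q, β * absQ q ≤ ⨆ v : V, B v q / ‖v‖) :
    ∃ α > (0 : ℝ), ∀ (u : V) (p : Q),
      α * Real.sqrt (‖u‖ ^ 2 + ‖p‖ ^ 2) ≤
        ⨆ vq : V × Q,
          (a u vq.1 + B vq.1 p + B u vq.2 - c p vq.2) /
            Real.sqrt (‖vq.1‖ ^ 2 + ‖vq.2‖ ^ 2) := by
  classical
  have hBle : ∀ v : V, ‖B v‖ ≤ ‖v‖ := by
    intro v
    have h2 : ‖B v‖^2 ≤ ‖v‖^2 := by nlinarith [hVfit v, sq_nonneg (absV v)]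
    have h3 := Real.sqrt_le_sqrt h2
    rwa [Real.sqrt_sq (norm_nonneg _), Real.sqrt_sq (norm_nonneg _)] at h3
  have hcQ : ∀ q : Q, c q q ≤ ‖q‖^2 := fun q => by nlinarith [hQfit q, sq_nonneg (absQ q)]
  have hcs : ∀ p q : Q, c p q ≤ Real.sqrt (c p p) * Real.sqrt (c q q) :=
    cs_aux' c hcsymm hcpos
  have hsqc : ∀ q : Q, Real.sqrt (c q q) ≤ ‖q‖ := by
    intro q
    have h3 := Real.sqrt_le_sqrt (hcQ q)
    rwa [Real.sqrt_sq (norm_nonneg _)] at h3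
  have hcab : 0 < ca * β^2 := mul_pos hca (pow_pos hβ 2)
  have hCa2 : 0 < Ca^2 := pow_pos hCa 2
  have hterm : 0 < 2*ca*β^2 + 2*ca + 4*Ca^2*ca := by linarith only [hcab, hca, mul_pos hCa2 hca]
  have hE' : 0 < β^2 + 2*ca*β^2 + 2*Ca^2 + 4*Ca^2*ca + ca*β^2 +
      (2*ca*β^2 + 2*ca + 4*Ca^2*ca)*(Ca+3) := by
    linarith only [hcab, hCa2, pow_pos hβ 2, mul_pos hCa2 hca,
      mul_pos hterm (show (0:ℝ) < Ca+3 by linarith only [hCa])]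
  refine ⟨ca * β^2 / (β^2 + 2*ca*β^2 + 2*Ca^2 + 4*Ca^2*ca + ca*β^2 +
      (2*ca*β^2 + 2*ca + 4*Ca^2*ca)*(Ca+3)), div_pos hcab hE', ?_⟩
  intro u p
  set E : ℝ := β^2 + 2*ca*β^2 + 2*Ca^2 + 4*Ca^2*ca + ca*β^2 +
      (2*ca*β^2 + 2*ca + 4*Ca^2*ca)*(Ca+3) with hEdef
  clear_value E
  have hE : 0 < E := hE'
  set N : ℝ := Real.sqrt (‖u‖ ^ 2 + ‖p‖ ^ 2) with hNdef
  have hNnn : 0 ≤ N := Real.sqrt_nonneg _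
  have hN2 : N^2 = ‖u‖^2 + ‖p‖^2 := Real.sq_sqrt (by positivity)
  have hnuN : ‖u‖ ≤ N := by
    rw [hNdef]; exact (Real.le_sqrt (norm_nonneg u) (by positivity)).mpr
      (by linarith only [sq_nonneg ‖p‖])
  have hnpN : ‖p‖ ≤ N := by
    rw [hNdef]; exact (Real.le_sqrt (norm_nonneg p) (by positivity)).mpr
      (by linarith only [sq_nonneg ‖u‖])
  clear_value N
  set f : V × Q → ℝ := fun vq =>
      (a u vq.1 + B vq.1 p + B u vq.2 - c p vq.2) /
        Real.sqrt (‖vq.1‖ ^ 2 + ‖vq.2‖ ^ 2) with hfdef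
  -- boundedness of f
  have hfb : ∀ vq : V × Q, f vq ≤ (Ca + 3) * N := by
    rintro ⟨v, q⟩
    simp only [hfdef]
    rcases eq_or_lt_of_le (Real.sqrt_nonneg (‖v‖^2 + ‖q‖^2)) with hd | hd
    · rw [← hd, div_zero]; exact mul_nonneg (by linarith) hNnn
    · rw [div_le_iff₀ hd]
      have hvd : ‖v‖ ≤ Real.sqrt (‖v‖^2 + ‖q‖^2) :=
        (Real.le_sqrt (norm_nonneg v) (by positivity)).mpr (by linarith only [sq_nonneg ‖q‖])
      have hqd : ‖q‖ ≤ Real.sqrt (‖v‖^2 + ‖q‖^2) :=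
        (Real.le_sqrt (norm_nonneg q) (by positivity)).mpr (by linarith only [sq_nonneg ‖v‖])
      have h1 : a u v ≤ Ca * ‖u‖ * ‖v‖ := hacont u v
      have h2 : B v p ≤ ‖v‖ * ‖p‖ := by
        calc B v p ≤ |B v p| := le_abs_self _
          _ = ‖B v p‖ := (Real.norm_eq_abs _).symm
          _ ≤ ‖B v‖ * ‖p‖ := (B v).le_opNorm p
          _ ≤ ‖v‖ * ‖p‖ := by
              exact mul_le_mul_of_nonneg_right (hBle v) (norm_nonneg p)
      have h3 : B u q ≤ ‖u‖ * ‖q‖ := by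
        calc B u q ≤ |B u q| := le_abs_self _
          _ = ‖B u q‖ := (Real.norm_eq_abs _).symm
          _ ≤ ‖B u‖ * ‖q‖ := (B u).le_opNorm q
          _ ≤ ‖u‖ * ‖q‖ := by
              exact mul_le_mul_of_nonneg_right (hBle u) (norm_nonneg q)
      have h4 : -(‖p‖ * ‖q‖) ≤ c p q := by
        have hneg : c p (-q) = -(c p q) := map_neg _ _
        have hqq : c (-q) (-q) = c q q := by simp
        have h4' := hcs p (-q)
        rw [hneg, hqq] at h4'
        have hb : Real.sqrt (c p p) * Real.sqrt (c q q) ≤ ‖p‖ * ‖q‖ :=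
          mul_le_mul (hsqc p) (hsqc q) (Real.sqrt_nonneg _) (norm_nonneg _)
        linarith
      have p1 : ‖u‖ * ‖v‖ ≤ N * Real.sqrt (‖v‖^2 + ‖q‖^2) :=
        mul_le_mul hnuN hvd (norm_nonneg v) hNnn
      have p2 : ‖v‖ * ‖p‖ ≤ Real.sqrt (‖v‖^2 + ‖q‖^2) * N :=
        mul_le_mul hvd hnpN (norm_nonneg p) (Real.sqrt_nonneg _)
      have p3 : ‖u‖ * ‖q‖ ≤ N * Real.sqrt (‖v‖^2 + ‖q‖^2) :=
        mul_le_mul hnuN hqd (norm_nonneg q) hNnn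
      have p4 : ‖p‖ * ‖q‖ ≤ N * Real.sqrt (‖v‖^2 + ‖q‖^2) :=
        mul_le_mul hnpN hqd (norm_nonneg q) hNnn
      linarith only [h1, h2, h3, h4, p1, p2, p3, p4, mul_le_mul_of_nonneg_left p1 hCa.le]
  have hbdd : BddAbove (Set.range f) := ⟨(Ca + 3) * N, by rintro x ⟨vq, rfl⟩; exact hfb vq⟩
  have hle : ∀ vq : V × Q, f vq ≤ ⨆ vq : V × Q, f vq := fun vq => le_ciSup hbdd vq
  set S : ℝ := ⨆ vq : V × Q, f vq with hSdef
  have hS0 : 0 ≤ S := by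
    have h := hle (0, 0)
    simpa [hfdef] using h
  have hSK : S ≤ (Ca + 3) * N := ciSup_le hfb
  clear_value S
  show ca * β^2 / E * N ≤ S
  rcases eq_or_lt_of_le hNnn with hN0 | hNpos
  · rw [← hN0, mul_zero]; exact hS0
  -- bound (A): test with (u, -p)
  · have hA : ca * absV u ^ 2 + c p p ≤ S * N := by
      have h := hle (u, -p)
      simp only [hfdef, map_neg, norm_neg] at h
      rw [← hNdef] at h
      have hnum : a u u + B u p + -(B u p) - -(c p p) = a u u + c p p := by ring
      rw [hnum, div_le_iff₀ hNpos] at h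
      linarith only [h, hacoer u]
    -- bound (B): test with (v, 0)
    have hB : β * absQ p ≤ S + Ca * ‖u‖ := by
      by_contra hcon
      push_neg at hcon
      have h1 : S + Ca * ‖u‖ < ⨆ v : V, B v p / ‖v‖ := lt_of_lt_of_le hcon (hinfsup p)
      obtain ⟨v, hv⟩ := exists_lt_of_lt_ciSup h1
      have hpos0 : 0 < B v p / ‖v‖ := by
        have h9 : (0:ℝ) ≤ Ca * ‖u‖ := mul_nonneg hCa.le (norm_nonneg u)
        linarith
      have hvne : 0 < ‖v‖ := by
        rcases eq_or_lt_of_le (norm_nonneg v) with h | h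
        · exfalso; rw [← h, div_zero] at hpos0; exact lt_irrefl _ hpos0
        · exact h
      have h2 := hle (v, 0)
      simp only [hfdef, map_zero, norm_zero, ContinuousLinearMap.zero_apply,
        add_zero, sub_zero] at h2
      rw [show (0:ℝ)^2 = 0 by norm_num, add_zero, Real.sqrt_sq (norm_nonneg v)] at h2
      have h3 : -(Ca * ‖u‖ * ‖v‖) ≤ a u v := by
        have h5 := hacont u (-v)
        rw [map_neg, norm_neg] at h5
        linarith
      rw [div_le_iff₀ hvne] at h2
      rw [lt_div_iff₀ hvne] at hv
      linarith only [h2, h3, hv]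
    -- bound (C): test with (0, q₀) via Riesz
    have hC : ‖B u‖ ≤ S + Real.sqrt (c p p) := by
      rcases eq_or_lt_of_le (norm_nonneg (B u)) with h | h
      · rw [← h]
        have := Real.sqrt_nonneg (c p p)
        linarith
      · set q0 : Q := (InnerProductSpace.toDual ℝ Q).symm (B u) with hq0
        have hnq0 : ‖q0‖ = ‖B u‖ := LinearIsometryEquiv.norm_map _ _
        have hq0pos : 0 < ‖q0‖ := by rw [hnq0]; exact h
        have happ : B u q0 = ‖q0‖^2 := by
          have h6 : inner ℝ q0 q0 = B u q0 :=
            InnerProductSpace.toDual_symm_apply (y := B u) (x := q0)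
          rw [real_inner_self_eq_norm_sq] at h6
          exact h6.symm
        have hcpq : c p q0 ≤ Real.sqrt (c p p) * ‖q0‖ := by
          have h1 := hcs p q0
          have h2 := hsqc q0
          nlinarith [Real.sqrt_nonneg (c p p)]
        have h2 := hle (0, q0)
        simp only [hfdef, map_zero, norm_zero, ContinuousLinearMap.zero_apply,
          zero_add, add_zero, LinearMap.zero_apply] at h2
        rw [show (0:ℝ)^2 = 0 by norm_num, zero_add, Real.sqrt_sq (norm_nonneg q0)] at h2
        rw [div_le_iff₀ hq0pos] at h2
        rw [← hnq0]
        nlinarith only [h2, hcpq, happ, hq0pos, Real.sqrt_nonneg (c p p), hS0]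
    -- final algebra
    have hfit := hVfit u
    have hfitQ := hQfit p
    have hcp_nn := hcpos p
    have hrp : Real.sqrt (c p p)^2 = c p p := Real.sq_sqrt hcp_nn
    have hrpnn : 0 ≤ Real.sqrt (c p p) := Real.sqrt_nonneg _
    have k1 : c p p ≤ S * N := by linarith only [hA, mul_nonneg hca.le (sq_nonneg (absV u))]
    have k2 : ca * absV u^2 ≤ S * N := by linarith only [hA, hcp_nn]
    have k3 : ‖B u‖^2 ≤ 2*S^2 + 2*(S*N) := by
      have hmul : ‖B u‖ * ‖B u‖ ≤ (S + Real.sqrt (c p p)) * (S + Real.sqrt (c p p)) :=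
        mul_le_mul hC hC (norm_nonneg _) (by linarith [hS0, hrpnn])
      linarith only [hmul, hrp, k1, sq_nonneg (S - Real.sqrt (c p p))]
    have k4 : β^2 * absQ p^2 ≤ 2*S^2 + 2*Ca^2*‖u‖^2 := by
      have hmul : (β * absQ p) * (β * absQ p) ≤ (S + Ca * ‖u‖) * (S + Ca * ‖u‖) :=
        mul_le_mul hB hB (mul_nonneg hβ.le (apply_nonneg absQ p))
          (by linarith [hS0, mul_nonneg hCa.le (norm_nonneg u)])
      linarith only [hmul, sq_nonneg (S - Ca * ‖u‖)]
    have k5 : S^2 ≤ (Ca+3)*N*S := by linarith only [mul_le_mul_of_nonneg_right hSK hS0]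
    -- assemble
    have hexp : ca*β^2*N^2 = ca*β^2*absV u^2 + ca*β^2*‖B u‖^2
        + ca*β^2*absQ p^2 + ca*β^2*(c p p) := by
      rw [hN2, hfit, hfitQ]; ring
    have t1 : β^2 * (ca * absV u^2) ≤ β^2 * (S*N) :=
      mul_le_mul_of_nonneg_left k2 (sq_nonneg β)
    have t2 : (ca*β^2) * ‖B u‖^2 ≤ (ca*β^2) * (2*S^2 + 2*(S*N)) :=
      mul_le_mul_of_nonneg_left k3 hcab.le
    have t3 : ca * (β^2 * absQ p^2) ≤ ca * (2*S^2 + 2*Ca^2*‖u‖^2) :=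
      mul_le_mul_of_nonneg_left k4 hca.le
    have t4 : (ca*β^2) * (c p p) ≤ (ca*β^2) * (S*N) :=
      mul_le_mul_of_nonneg_left k1 hcab.le
    have t5a : ca * ‖u‖^2 ≤ S*N + ca*(2*S^2 + 2*(S*N)) := by
      have hfitca : ca*‖u‖^2 = ca*absV u^2 + ca*‖B u‖^2 := by rw [hfit]; ring
      have k3ca : ca * ‖B u‖^2 ≤ ca * (2*S^2 + 2*(S*N)) :=
        mul_le_mul_of_nonneg_left k3 hca.le
      linarith only [hfitca, k2, k3ca]
    have t5 : (2*Ca^2) * (ca * ‖u‖^2) ≤ (2*Ca^2) * (S*N + ca*(2*S^2 + 2*(S*N))) :=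
      mul_le_mul_of_nonneg_left t5a (by linarith [hCa2])
    have t6 : (2*ca*β^2 + 2*ca + 4*Ca^2*ca) * S^2
        ≤ (2*ca*β^2 + 2*ca + 4*Ca^2*ca) * ((Ca+3)*N*S) :=
      mul_le_mul_of_nonneg_left k5 hterm.le
    have final : ca * β^2 * N^2 ≤ E * (S*N) := by
      rw [hEdef]
      linarith only [hexp, t1, t2, t3, t4, t5, t6]
    have final2 : ca * β^2 * N ≤ E * S := by
      have h := final
      have : (ca * β^2 * N) * N ≤ (E * S) * N := by linarith only [h]
      exact le_of_mul_le_mul_right this hNpos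
    rw [div_mul_eq_mul_div, div_le_iff₀ hE]
    linarith only [final2]
end

section
/- Let H be a real Hilbert space and 𝒜 a bounded bilinear form on H satisfying the inf-sup condition inf_{x≠0} sup_{y≠0} 𝒜(x,y)/(‖x‖‖y‖) ≥ α > 0 and the transposed nondegeneracy condition (for all y ≠ 0 there exists x with 𝒜(x,y) ≠ 0). Then for every bounded linear functional F ∈ H' the problem 𝒜(x,y) = F(y) for all y ∈ H has a unique solution x, and ‖x‖ ≤ α⁻¹ ‖F‖_{H'}. -/
/-- Babuška's theorem (existence, uniqueness, stability) for a bounded bilinear form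
satisfying the inf-sup condition and the transposed nondegeneracy condition. -/
theorem stmt17 {H : Type*} [NormedAddCommGroup H] [InnerProductSpace ℝ H] [CompleteSpace H]
    (A : H →L[ℝ] H →L[ℝ] ℝ) (α : ℝ) (hα : 0 < α)
    (hinfsup : ∀ x : H, α * ‖x‖ ≤ ⨆ y : H, A x y / ‖y‖)
    (hT : ∀ y : H, y ≠ 0 → ∃ x : H, A x y ≠ 0) :
    ∀ F : StrongDual ℝ H,
      (∃! x : H, ∀ y : H, A x y = F y) ∧
      ∀ x : H, (∀ y : H, A x y = F y) → ‖x‖ ≤ α⁻¹ * ‖F‖ := by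
  -- key bound : α * ‖x‖ ≤ ‖A x‖
  have key : ∀ x : H, α * ‖x‖ ≤ ‖A x‖ := by
    intro x
    refine (hinfsup x).trans (ciSup_le fun y => ?_)
    rcases eq_or_ne y 0 with rfl | hy
    · simp
    · rw [div_le_iff₀ (norm_pos_iff.mpr hy)]
      calc A x y ≤ |A x y| := le_abs_self _
        _ ≤ ‖A x‖ * ‖y‖ := (A x).le_opNorm y
  -- the Riesz operator, built as a real continuous linear map
  let Tl : H →ₗ[ℝ] H :=
    { toFun := fun x => (InnerProductSpace.toDual ℝ H).symm (A x)
      map_add' := fun a b => by simp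
      map_smul' := fun c a => by simp }
  have hTlnorm : ∀ x : H, ‖Tl x‖ = ‖A x‖ := fun x =>
    (InnerProductSpace.toDual ℝ H).symm.norm_map (A x)
  let T : H →L[ℝ] H := Tl.mkContinuous ‖A‖ (fun x => by
    rw [hTlnorm x]; exact A.le_opNorm x)
  have hTeq : ∀ x : H, T x = (InnerProductSpace.toDual ℝ H).symm (A x) := fun _ => rfl
  have hTA : ∀ x y : H, (inner ℝ (T x) y : ℝ) = A x y := by
    intro x y
    rw [hTeq, ← InnerProductSpace.toDual_apply_apply, LinearIsometryEquiv.apply_symm_apply]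
  have hnorm : ∀ x : H, α * ‖x‖ ≤ ‖T x‖ := by
    intro x
    have h1 : ‖T x‖ = ‖A x‖ := by rw [hTeq, LinearIsometryEquiv.norm_map]
    rw [h1]; exact key x
  -- T is antilipschitz, hence has closed range
  have hanti : AntilipschitzWith (Real.toNNReal α)⁻¹ T := by
    refine ContinuousLinearMap.antilipschitz_of_bound T fun x => ?_
    rw [NNReal.coe_inv, Real.coe_toNNReal _ hα.le]
    calc ‖x‖ = α⁻¹ * (α * ‖x‖) := by field_simp
      _ ≤ α⁻¹ * ‖T x‖ :=
        mul_le_mul_of_nonneg_left (hnorm x) (inv_nonneg.2 hα.le)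
  have hclosed : IsClosed (Set.range T) :=
    hanti.isClosed_range T.uniformContinuous
  -- T has dense range
  have hdense : (LinearMap.range (T : H →ₗ[ℝ] H)).topologicalClosure = ⊤ := by
    rw [Submodule.topologicalClosure_eq_top_iff, Submodule.eq_bot_iff]
    intro y hy
    by_contra hy0
    obtain ⟨x, hx⟩ := hT y hy0
    have h2 : (inner ℝ (T x) y : ℝ) = 0 :=
      (Submodule.mem_orthogonal _ y).mp hy (T x) ⟨x, rfl⟩
    rw [hTA] at h2
    exact hx h2
  -- hence T is surjective
  have hsurj : ∀ g : H, ∃ x : H, T x = g := by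
    intro g
    have hr : (LinearMap.range (T : H →ₗ[ℝ] H) : Set H) = Set.range T := by
      ext z; simp [LinearMap.mem_range]
    have hcl : (LinearMap.range (T : H →ₗ[ℝ] H)).topologicalClosure = LinearMap.range (T : H →ₗ[ℝ] H) := by
      apply le_antisymm
      · intro z hz
        have hz' : z ∈ closure (LinearMap.range (T : H →ₗ[ℝ] H) : Set H) := hz
        rwa [hr, hclosed.closure_eq] at hz'
      · exact Submodule.le_topologicalClosure _
    have htop : LinearMap.range (T : H →ₗ[ℝ] H) = ⊤ := by rw [← hcl, hdense]
    exact LinearMap.mem_range.mp (by rw [htop]; trivial)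
  intro F
  obtain ⟨x₀, hx₀⟩ := hsurj ((InnerProductSpace.toDual ℝ H).symm F)
  have hx₀sol : ∀ y : H, A x₀ y = F y := by
    intro y
    rw [← hTA, hx₀, ← InnerProductSpace.toDual_apply_apply, LinearIsometryEquiv.apply_symm_apply]
  have stab : ∀ x : H, (∀ y : H, A x y = F y) → ‖x‖ ≤ α⁻¹ * ‖F‖ := by
    intro x hx
    have hAx : A x = F := ContinuousLinearMap.ext hx
    have h3 := key x
    rw [hAx] at h3
    rw [inv_mul_eq_div, le_div_iff₀' hα]
    exact h3
  refine ⟨⟨x₀, hx₀sol, ?_⟩, stab⟩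
  intro x hx
  have h0 : A (x - x₀) = 0 := ContinuousLinearMap.ext fun y => by
    simp [map_sub, hx y, hx₀sol y]
  have h4 := key (x - x₀)
  rw [h0, norm_zero] at h4
  have hle : ‖x - x₀‖ ≤ 0 := by nlinarith [norm_nonneg (x - x₀)]
  have h5 : x - x₀ = 0 := norm_le_zero_iff.mp hle
  exact sub_eq_zero.mp h5
end
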